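/- For a, b > 0, ∫₀^∞ (b·ln(1 + ax) - a·ln(1 + bx))/x² dx = a·b·ln(b/a). -/

import Mathlib

open MeasureTheory Real Set
open Filter Topology

lemma logd (c : ℝ) {x : ℝ} (hc : 0 < c) (hx : 0 ≤ x) :
    HasDerivAt (fun y => Real.log (1 + c*y)) (c/(1+c*x)) x := by
  have h : (1:ℝ) + c*x ≠ 0 := by nlinarith [mul_nonneg hc.le hx]
  have := (((hasDerivAt_id x).const_mul c).const_add 1).log h
  simpa using this

lemma num_bound (c : ℝ) {x : ℝ} (hc : 0 < c) (hx : 0 ≤ x) :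
    c*x - c^2*x^2 ≤ Real.log (1+c*x) ∧ Real.log (1+c*x) ≤ c*x := by
  have h1 : (0:ℝ) < 1 + c*x := by nlinarith [mul_nonneg hc.le hx]
  constructor
  · have h2 := Real.one_sub_inv_le_log_of_pos h1
    have h3 : c*x - c^2*x^2 ≤ 1 - (1+c*x)⁻¹ := by
      rw [inv_eq_one_div, sub_div', le_div_iff₀ h1]
      nlinarith [mul_nonneg hc.le hx, sq_nonneg (c*x)]
      exact h1.ne'
    linarith
  · have := Real.log_le_sub_one_of_pos h1
    linarith

theorem frullani_log (a b : ℝ) (ha : 0 < a) (hb : 0 < b) :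
    ∫ x in Ioi (0:ℝ), (b * Real.log (1 + a * x) - a * Real.log (1 + b * x)) / x ^ 2
      = a * b * Real.log (b / a) := by
  set f' : ℝ → ℝ := fun x => (b * Real.log (1 + a * x) - a * Real.log (1 + b * x)) / x ^ 2
    with hf'
  set F : ℝ → ℝ := fun x =>
    (a * Real.log (1 + b * x) - b * Real.log (1 + a * x)) / x
      + a * b * (Real.log (1 + b * x) - Real.log (1 + a * x)) with hF
  have hF0 : F 0 = 0 := by simp [hF]
  -- continuity at 0
  have hcont : ContinuousWithinAt F (Ici 0) 0 := by
    rw [← Set.Ioi_insert, continuousWithinAt_insert_self]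
    rw [ContinuousWithinAt, hF0]
    have hg : HasDerivAt (fun x => a * Real.log (1 + b*x) - b * Real.log (1 + a*x)) 0 0 := by
      have := ((logd b hb (le_refl (0:ℝ))).const_mul a).sub
        ((logd a ha (le_refl (0:ℝ))).const_mul b)
      exact this.congr_deriv (by norm_num [mul_comm])
    have hs := hasDerivAt_iff_tendsto_slope.mp hg
    have hs' : Tendsto (fun x => (a * Real.log (1 + b*x) - b * Real.log (1 + a*x)) / x)
        (𝓝[Set.Ioi 0] 0) (𝓝 0) := by
      have := hs.mono_left (nhdsWithin_mono 0 (fun x hx => (ne_of_gt hx : x ≠ 0)))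
      refine this.congr (fun x => ?_)
      simp [slope_def_field, div_eq_iff]
    have h2 : Tendsto (fun x => a * b * (Real.log (1 + b*x) - Real.log (1 + a*x)))
        (𝓝[Set.Ioi 0] 0) (𝓝 0) := by
      have hc := ((((logd b hb (le_refl (0:ℝ))).continuousAt).sub
          ((logd a ha (le_refl (0:ℝ))).continuousAt)).const_mul (a*b)).mono_left
          (nhdsWithin_le_nhds : 𝓝[Set.Ioi (0:ℝ)] 0 ≤ 𝓝 0)
      simpa using hc
    have := hs'.add h2
    simpa using this
  -- derivative on Ioi 0
  have hderiv : ∀ x ∈ Ioi (0:ℝ), HasDerivAt F (f' x) x := by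
    intro x hx
    have hx0 : 0 < x := hx
    have h1a : (0:ℝ) < 1 + a*x := by nlinarith
    have h1b : (0:ℝ) < 1 + b*x := by nlinarith
    have hg := ((logd b hb hx0.le).const_mul a).sub ((logd a ha hx0.le).const_mul b)
    have hdiv := hg.div (hasDerivAt_id x) hx0.ne'
    have h2 := ((logd b hb hx0.le).sub (logd a ha hx0.le)).const_mul (a*b)
    have := hdiv.add h2
    refine this.congr_deriv ?_
    simp only [hf', id_eq, Pi.sub_apply]
    field_simp
    ring
  -- tendsto at top
  have htend : Tendsto F atTop (𝓝 (a * b * Real.log (b / a))) := by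
    have key : ∀ c : ℝ, 0 < c → Tendsto (fun x => Real.log (1 + c*x) / x) atTop (𝓝 0) := by
      intro c hc
      have h1 : Tendsto (fun x : ℝ => 1 + c*x) atTop atTop :=
        tendsto_atTop_add_const_left _ 1 (tendsto_id.const_mul_atTop hc)
      have h2 : Tendsto (fun x : ℝ => Real.log (1 + c*x) / (1 + c*x)) atTop (𝓝 0) :=
        (Real.isLittleO_log_id_atTop.tendsto_div_nhds_zero).comp h1
      have h3 : Tendsto (fun x : ℝ => (1 + c*x) / x) atTop (𝓝 c) := by
        have h4 : Tendsto (fun x : ℝ => x⁻¹ + c) atTop (𝓝 (0 + c)) :=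
          tendsto_inv_atTop_zero.add tendsto_const_nhds
        rw [zero_add] at h4
        refine h4.congr' ?_
        filter_upwards [eventually_gt_atTop (0:ℝ)] with x hx
        field_simp
      have h5 := h2.mul h3
      rw [zero_mul] at h5
      refine h5.congr' ?_
      filter_upwards [eventually_gt_atTop (0:ℝ)] with x hx
      have h1b : (0:ℝ) < 1 + c*x := by nlinarith
      field_simp
    have t1 : Tendsto (fun x => (a * Real.log (1 + b * x) - b * Real.log (1 + a * x)) / x)
        atTop (𝓝 0) := by
      have := ((key b hb).const_mul a).sub ((key a ha).const_mul b)
      simp only [mul_zero, sub_zero] at this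
      refine this.congr' ?_
      filter_upwards [eventually_gt_atTop (0:ℝ)] with x hx
      field_simp
    have t2 : Tendsto (fun x => a * b * (Real.log (1 + b * x) - Real.log (1 + a * x)))
        atTop (𝓝 (a * b * Real.log (b / a))) := by
      have hr : Tendsto (fun x : ℝ => (1 + b*x) / (1 + a*x)) atTop (𝓝 (b / a)) := by
        have h4 : Tendsto (fun x : ℝ => (x⁻¹ + b) / (x⁻¹ + a)) atTop (𝓝 ((0+b) / (0+a))) :=
          (tendsto_inv_atTop_zero.add tendsto_const_nhds).div
            (tendsto_inv_atTop_zero.add tendsto_const_nhds) (by simpa using ha.ne')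
        rw [zero_add, zero_add] at h4
        refine h4.congr' ?_
        filter_upwards [eventually_gt_atTop (0:ℝ)] with x hx
        have h1a : (0:ℝ) < 1 + a*x := by nlinarith
        rw [div_eq_div_iff (by positivity) h1a.ne']
        field_simp
      have hlog := ((Real.continuousAt_log (by positivity : (b/a : ℝ) ≠ 0)).tendsto.comp hr)
      have := hlog.const_mul (a*b)
      refine this.congr' ?_
      filter_upwards [eventually_gt_atTop (0:ℝ)] with x hx
      have h1a : (0:ℝ) < 1 + a*x := by nlinarith
      have h1b : (0:ℝ) < 1 + b*x := by nlinarith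
      simp only [Function.comp_apply]
      rw [Real.log_div h1b.ne' h1a.ne']
    have := t1.add t2
    rw [zero_add] at this
    exact this
  have hint : IntegrableOn f' (Ioi (0:ℝ)) := by
    have hmeas : AEStronglyMeasurable f' (volume.restrict (Ioi (0:ℝ))) := by
      apply Measurable.aestronglyMeasurable
      rw [hf']
      exact ((measurable_const.mul (Real.measurable_log.comp
          (measurable_const.add (measurable_const.mul measurable_id)))).sub
        (measurable_const.mul (Real.measurable_log.comp
          (measurable_const.add (measurable_const.mul measurable_id))))).div
        (measurable_id.pow_const 2)
    have hsplit : Ioi (0:ℝ) = Ioc 0 1 ∪ Ioi 1 := (Set.Ioc_union_Ioi_eq_Ioi zero_le_one).symm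
    rw [hsplit]
    apply IntegrableOn.union
    · -- near zero: bounded
      refine Integrable.mono' (g := fun _ => a^2*b + a*b^2)
        (integrableOn_const measure_Ioc_lt_top.ne) (hmeas.mono_set Ioc_subset_Ioi_self) ?_
      filter_upwards [ae_restrict_mem measurableSet_Ioc] with x hx
      have hx0 : 0 < x := hx.1
      have na := num_bound a (x := x) ha hx0.le
      have nb := num_bound b (x := x) hb hx0.le
      have hx2 : (0:ℝ) < x^2 := by positivity
      have habs : |b * Real.log (1 + a * x) - a * Real.log (1 + b * x)| ≤ (a^2*b + a*b^2) * x^2 := by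
        rw [abs_le]
        constructor <;> nlinarith [na.1, na.2, nb.1, nb.2]
      simp only [hf', Real.norm_eq_abs, abs_div, abs_of_pos hx2]
      rw [div_le_iff₀ hx2]
      nlinarith
    · -- at infinity: dominated by rpow
      set C : ℝ := b*(Real.log (1+a)+2) + a*(Real.log (1+b)+2) with hC
      refine Integrable.mono' (g := fun x => C * x ^ (-(3:ℝ)/2))
        ((integrableOn_Ioi_rpow_of_lt (by norm_num) one_pos).const_mul C)
        (hmeas.mono_set (Ioi_subset_Ioi zero_le_one)) ?_
      filter_upwards [ae_restrict_mem measurableSet_Ioi] with x hx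
      have hx1 : (1:ℝ) < x := hx
      have hx0 : (0:ℝ) < x := by linarith
      have logb : ∀ c : ℝ, 0 < c → Real.log (1 + c*x) ≤ (Real.log (1+c) + 2) * Real.sqrt x := by
        intro c hc
        have h1c : (0:ℝ) < 1 + c*x := by nlinarith
        have hle : 1 + c*x ≤ (1+c)*x := by nlinarith
        have l1 : Real.log (1 + c*x) ≤ Real.log ((1+c)*x) := Real.log_le_log h1c hle
        have l2 : Real.log ((1+c)*x) = Real.log (1+c) + Real.log x :=
          Real.log_mul (by positivity) hx0.ne'
        have l3 : Real.log x ≤ 2 * Real.sqrt x := by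
          have := Real.log_le_sub_one_of_pos (Real.sqrt_pos.2 hx0)
          have hsq : Real.log (Real.sqrt x) = Real.log x / 2 := Real.log_sqrt hx0.le
          nlinarith [Real.sqrt_nonneg x]
        have hs1 : (1:ℝ) ≤ Real.sqrt x := Real.one_le_sqrt.2 hx1.le
        have hlc : (0:ℝ) ≤ Real.log (1+c) := Real.log_nonneg (by linarith)
        calc Real.log (1 + c*x) ≤ Real.log (1+c) + Real.log x := by rw [← l2]; exact l1
          _ ≤ Real.log (1+c) * Real.sqrt x + 2 * Real.sqrt x := by
              nlinarith
          _ = (Real.log (1+c) + 2) * Real.sqrt x := by ring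
      have hlog_nonneg : ∀ c : ℝ, 0 < c → 0 ≤ Real.log (1 + c*x) := fun c hc =>
        Real.log_nonneg (by nlinarith)
      have hnum : |b * Real.log (1 + a * x) - a * Real.log (1 + b * x)| ≤ C * Real.sqrt x := by
        rw [abs_sub_le_iff]
        have la := logb a ha
        have lb := logb b hb
        have na := hlog_nonneg a ha
        have nb := hlog_nonneg b hb
        have hs0 : (0:ℝ) ≤ Real.sqrt x := Real.sqrt_nonneg x
        constructor <;> [skip; skip] <;>
          · rw [hC]; nlinarith
      have hx2 : (0:ℝ) < x^2 := by positivity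
      have hrw : Real.sqrt x / x^2 = x ^ (-(3:ℝ)/2) := by
        rw [Real.sqrt_eq_rpow, ← Real.rpow_natCast x 2, ← Real.rpow_sub hx0]
        norm_num
      simp only [hf', Real.norm_eq_abs, abs_div, abs_of_pos hx2]
      calc |b * Real.log (1 + a * x) - a * Real.log (1 + b * x)| / x^2
          ≤ (C * Real.sqrt x) / x^2 := by gcongr
        _ = C * (Real.sqrt x / x^2) := by ring
        _ = C * x ^ (-(3:ℝ)/2) := by rw [hrw]
  have := integral_Ioi_of_hasDerivAt_of_tendsto hcont hderiv hint htend
  rw [this, hF0, sub_zero]
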